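/- Let d, n, s be integers with 1 ≤ s ≤ d − 1 and 2d ≤ n. Let α and λ be real numbers with 0 ≤ α ≤ n/d and λ ≠ 0, and set z = −α + λ·n·i. Then |f_{n,s}(z)| / |f_{n,0}(z)| < C(n,s) · ( ((d−s)² + 1/λ²) / d² )^{(n−1)/2}. (Here f_{n,0}(z) ≠ 0 since each factor d·z + j has imaginary part d·λ·n ≠ 0.) -/

import Mathlib

lemma key_real (d n s j : ℕ) (hsd : s + 1 ≤ d) (hn : 2 * d ≤ n)
    (hj1 : 1 ≤ j) (hj2 : (j : ℝ) ≤ (n : ℝ) - 1)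
    (α lam : ℝ) (hα0 : 0 ≤ α) (hα1 : α ≤ (n : ℝ) / d) (hlam : lam ≠ 0) :
    ((j : ℝ) - s - ((d : ℝ) - s) * α) ^ 2 + ((d : ℝ) - s) ^ 2 * lam ^ 2 * n ^ 2 <
      ((((d : ℝ) - s) ^ 2 + 1 / lam ^ 2) / (d : ℝ) ^ 2) *
        (((j : ℝ) - d * α) ^ 2 + (d : ℝ) ^ 2 * lam ^ 2 * n ^ 2) := by
  have hd0 : (0 : ℝ) < d := by
    have : 1 ≤ d := le_trans (Nat.le_add_left 1 s) hsd
    exact_mod_cast Nat.lt_of_lt_of_le Nat.zero_lt_one this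
  have hsd' : (s : ℝ) + 1 ≤ (d : ℝ) := by exact_mod_cast hsd
  have hn' : 2 * (d : ℝ) ≤ (n : ℝ) := by exact_mod_cast hn
  have hj1' : (1 : ℝ) ≤ (j : ℝ) := by exact_mod_cast hj1
  have hs0 : (0 : ℝ) ≤ (s : ℝ) := Nat.cast_nonneg s
  have hl2 : (0 : ℝ) < lam ^ 2 := by positivity
  have hαd : (d : ℝ) * α ≤ (n : ℝ) := by
    rw [div_eq_mul_inv] at hα1
    calc (d : ℝ) * α ≤ (d : ℝ) * ((n:ℝ) * (d:ℝ)⁻¹) := by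
            exact mul_le_mul_of_nonneg_left hα1 hd0.le
      _ = (n : ℝ) := by field_simp
  have ha1 : (1 : ℝ) ≤ (d : ℝ) - s := by linarith
  have haα : (0:ℝ) ≤ ((d:ℝ) - s) * α := mul_nonneg (by linarith) hα0
  have hupper : (j : ℝ) - s - ((d : ℝ) - s) * α ≤ (n : ℝ) - 1 := by nlinarith
  have hlower : -((n : ℝ) - 1) ≤ (j : ℝ) - s - ((d : ℝ) - s) * α := by
    nlinarith [mul_nonneg (by linarith : (0:ℝ) ≤ (d:ℝ) - s) (by linarith : (0:ℝ) ≤ (n:ℝ) - (d:ℝ)*α),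
      mul_nonneg hs0 (by linarith : (0:ℝ) ≤ (n:ℝ) - 2*(d:ℝ))]
  have hsq : ((j : ℝ) - s - ((d : ℝ) - s) * α) ^ 2 ≤ ((n : ℝ) - 1) ^ 2 := sq_le_sq' hlower hupper
  have hn1 : (1 : ℝ) ≤ (n : ℝ) := by linarith
  have hrw : ((((d : ℝ) - s) ^ 2 + 1 / lam ^ 2) / (d : ℝ) ^ 2) =
      (((d : ℝ) - s) ^ 2 * lam ^ 2 + 1) / (lam ^ 2 * (d : ℝ) ^ 2) := by
    field_simp
  rw [hrw, div_mul_eq_mul_div, lt_div_iff₀ (by positivity)]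
  have hexp : (0:ℝ) < lam ^ 2 * (d:ℝ) ^ 2 := by positivity
  nlinarith [mul_le_mul_of_nonneg_right hsq hexp.le,
    mul_nonneg (mul_nonneg (sq_nonneg ((d:ℝ) - s)) hl2.le) (sq_nonneg ((j:ℝ) - d*α)),
    sq_nonneg ((j:ℝ) - d*α), mul_pos hl2 hexp]

/-- `f_{n,s}(z) = C(n,s) · ∏_{j=1}^{n−1} ((d−s)·z + j − s)`. -/
noncomputable def hyperF (d n s : ℕ) (z : ℂ) : ℂ :=
  (n.choose s : ℂ) * ∏ j ∈ Finset.Icc 1 (n - 1), (((d : ℂ) - (s : ℂ)) * z + (j : ℂ) - (s : ℂ))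

theorem stmt_7 (d n s : ℕ) (hs : 1 ≤ s) (hs' : s ≤ d - 1) (hn : 2 * d ≤ n)
    (α lam : ℝ) (hα0 : 0 ≤ α) (hα1 : α ≤ (n : ℝ) / d) (hlam : lam ≠ 0) :
    ‖hyperF d n s (-(α : ℂ) + (lam : ℂ) * n * Complex.I)‖ /
        ‖hyperF d n 0 (-(α : ℂ) + (lam : ℂ) * n * Complex.I)‖ <
      (n.choose s : ℝ) * ((((d : ℝ) - s) ^ 2 + 1 / lam ^ 2) / (d : ℝ) ^ 2) ^ (((n : ℝ) - 1) / 2) := by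
  set z : ℂ := -(α : ℂ) + (lam : ℂ) * n * Complex.I with hz
  have hsd : s + 1 ≤ d := by omega
  have hd2 : 2 ≤ d := by omega
  have hn4 : 4 ≤ n := by omega
  have hd0 : (0 : ℝ) < d := by positivity
  have hsd' : (s : ℝ) + 1 ≤ (d : ℝ) := by exact_mod_cast hsd
  have hn0 : (0 : ℝ) < n := by exact_mod_cast (by omega : 0 < n)
  have hl2 : (0 : ℝ) < lam ^ 2 := by positivity
  set K : ℝ := (((d : ℝ) - s) ^ 2 + 1 / lam ^ 2) / (d : ℝ) ^ 2 with hK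
  have hK0 : 0 ≤ K := by
    apply div_nonneg _ (by positivity)
    have : (0:ℝ) ≤ 1 / lam ^ 2 := by positivity
    nlinarith [sq_nonneg ((d:ℝ) - s)]
  -- re and im of the factors
  have hre : ∀ (t j : ℕ), (((d : ℂ) - (t : ℂ)) * z + (j : ℂ) - (t : ℂ)).re
      = (j : ℝ) - t - ((d : ℝ) - t) * α := by
    intro t j
    simp [hz]
    ring
  have him : ∀ (t j : ℕ), (((d : ℂ) - (t : ℂ)) * z + (j : ℂ) - (t : ℂ)).im
      = ((d : ℝ) - t) * (lam * n) := by
    intro t j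
    simp [hz]
  -- each factor has positive abs
  have habs_sq : ∀ (t j : ℕ), (‖((d : ℂ) - (t : ℂ)) * z + (j : ℂ) - (t : ℂ)‖) ^ 2
      = ((j : ℝ) - t - ((d : ℝ) - t) * α) ^ 2 + ((d : ℝ) - t) ^ 2 * lam ^ 2 * (n : ℝ) ^ 2 := by
    intro t j
    rw [Complex.sq_norm, Complex.normSq_apply, hre, him]
    ring
  have hpos : ∀ (t j : ℕ), t + 1 ≤ d → 0 < ‖((d : ℂ) - (t : ℂ)) * z + (j : ℂ) - (t : ℂ)‖ := by
    intro t j htd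
    have ht' : (t : ℝ) + 1 ≤ (d : ℝ) := by exact_mod_cast htd
    have h2 : (0:ℝ) < ((j : ℝ) - t - ((d : ℝ) - t) * α) ^ 2 + ((d : ℝ) - t) ^ 2 * lam ^ 2 * (n : ℝ) ^ 2 := by
      have : (0:ℝ) < ((d : ℝ) - t) ^ 2 * lam ^ 2 * (n : ℝ) ^ 2 := by
        apply mul_pos (mul_pos _ hl2) (by positivity)
        nlinarith
      nlinarith [sq_nonneg ((j : ℝ) - t - ((d : ℝ) - t) * α)]
    rw [← habs_sq t j] at h2
    nlinarith [norm_nonneg (((d : ℂ) - (t : ℂ)) * z + (j : ℂ) - (t : ℂ))]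
  -- per-factor strict inequality
  have hfac : ∀ j ∈ Finset.Icc 1 (n - 1),
      ‖((d : ℂ) - (s : ℂ)) * z + (j : ℂ) - (s : ℂ)‖ <
        Real.sqrt K * ‖((d : ℂ) - (0 : ℕ)) * z + (j : ℂ) - (0 : ℕ)‖ := by
    intro j hj
    rw [Finset.mem_Icc] at hj
    apply lt_of_pow_lt_pow_left₀ 2 (by positivity)
    rw [mul_pow, Real.sq_sqrt hK0, habs_sq, habs_sq]
    have hkey := key_real d n s j hsd hn hj.1
      (by
        have : (j:ℝ) ≤ ((n:ℕ) - 1 : ℕ) := by exact_mod_cast hj.2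
        rw [Nat.cast_sub (by omega : 1 ≤ n)] at this
        simpa using this) α lam hα0 hα1 hlam
    push_cast
    push_cast at hkey
    nlinarith [hkey]
  have hne : (Finset.Icc 1 (n - 1)).Nonempty := Finset.nonempty_Icc.mpr (by omega)
  have hprod : ∏ j ∈ Finset.Icc 1 (n - 1), ‖((d : ℂ) - (s : ℂ)) * z + (j : ℂ) - (s : ℂ)‖ <
      ∏ j ∈ Finset.Icc 1 (n - 1), (Real.sqrt K * ‖((d : ℂ) - (0 : ℕ)) * z + (j : ℂ) - (0 : ℕ)‖) := by
    apply Finset.prod_lt_prod_of_nonempty _ hfac hne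
    intro j hj
    exact hpos s j hsd
  have hsplit : ∏ j ∈ Finset.Icc 1 (n - 1), (Real.sqrt K * ‖((d : ℂ) - (0 : ℕ)) * z + (j : ℂ) - (0 : ℕ)‖)
      = Real.sqrt K ^ (n - 1) * ∏ j ∈ Finset.Icc 1 (n - 1), ‖((d : ℂ) - (0 : ℕ)) * z + (j : ℂ) - (0 : ℕ)‖ := by
    rw [Finset.prod_mul_distrib, Finset.prod_const, Nat.card_Icc]
    norm_num
  have hP0 : 0 < ∏ j ∈ Finset.Icc 1 (n - 1), ‖((d : ℂ) - (0 : ℕ)) * z + (j : ℂ) - (0 : ℕ)‖ := by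
    apply Finset.prod_pos
    intro j hj
    exact hpos 0 j (by omega)
  -- rewrite sqrt K ^ (n-1) as rpow
  have hpow : Real.sqrt K ^ (n - 1) = K ^ (((n : ℝ) - 1) / 2) := by
    rw [Real.sqrt_eq_rpow, ← Real.rpow_natCast (K ^ ((1:ℝ)/2)) (n-1), ← Real.rpow_mul hK0]
    congr 1
    rw [Nat.cast_sub (by omega : 1 ≤ n)]
    push_cast
    ring
  -- abs of hyperF
  have habsS : ‖hyperF d n s z‖
      = (n.choose s : ℝ) * ∏ j ∈ Finset.Icc 1 (n - 1), ‖((d : ℂ) - (s : ℂ)) * z + (j : ℂ) - (s : ℂ)‖ := by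
    rw [hyperF, norm_mul, norm_prod]
    norm_num
  have habs0 : ‖hyperF d n 0 z‖
      = ∏ j ∈ Finset.Icc 1 (n - 1), ‖((d : ℂ) - (0 : ℕ)) * z + (j : ℂ) - (0 : ℕ)‖ := by
    rw [hyperF, norm_mul, norm_prod]
    norm_num
  rw [habsS, habs0, div_lt_iff₀ hP0]
  have hch : (0:ℝ) < (n.choose s : ℝ) := by
    have : 0 < n.choose s := Nat.choose_pos (by omega)
    exact_mod_cast this
  calc (n.choose s : ℝ) * ∏ j ∈ Finset.Icc 1 (n - 1), ‖((d : ℂ) - (s : ℂ)) * z + (j : ℂ) - (s : ℂ)‖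
      < (n.choose s : ℝ) * (Real.sqrt K ^ (n - 1) * ∏ j ∈ Finset.Icc 1 (n - 1), ‖((d : ℂ) - (0 : ℕ)) * z + (j : ℂ) - (0 : ℕ)‖) := by
        apply mul_lt_mul_of_pos_left _ hch
        rw [← hsplit]
        exact hprod
    _ = (n.choose s : ℝ) * K ^ (((n : ℝ) - 1) / 2) * ∏ j ∈ Finset.Icc 1 (n - 1), ‖((d : ℂ) - (0 : ℕ)) * z + (j : ℂ) - (0 : ℕ)‖ := by
        rw [hpow, mul_assoc]
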